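/- arXiv:0711.0906 — 2 statements merged into one kernel-verified Lean document; each statement's English description precedes it below -/
import Mathlib

section
/- Fix an integer p≥2 and let B_p : ℕ → (Fin (p−1) → ℕ) → ℕ satisfy: B_p(1,0)=1 (where 0 is the zero tuple); for all n>1 and every tuple k=(k₁,…,k_{p−1}) with k₁+⋯+k_{p−1}<n, B_p(n,k) = ∑ B_p(n−1,i), the sum over all tuples i with 0≤i_j≤k_j for each j; and B_p(n,k)=0 whenever k₁+⋯+k_{p−1}≥n. Then for every positive integer n, ∑_k B_p(n,k) = C_p(n), where C_p(n) = (1/((p−1)n+1))·binom(pn,n); equivalently ((p−1)n+1)·∑_k B_p(n,k) = binom(pn,n). -/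
open Finset Finset.Nat

lemma FC_hockey (K m : ℕ) : ∑ j ∈ range (m+1), (K+j).choose j = (K+m+1).choose m := by
  induction m with
  | zero => simp
  | succ m ih =>
    rw [sum_range_succ, ih]
    have e1 : K+(m+1) = K+m+1 := by ring
    have e2 : K+(m+1)+1 = (K+m+1)+1 := by ring
    rw [e1]
    exact (Nat.choose_succ_succ' (K+m+1) m).symm

lemma FC_hockey' (K m : ℕ) : 1 + ∑ j ∈ range (m+1), (K+j).choose (j+1) = (K+m+1).choose (m+1) := by
  induction m with
  | zero => simp [Nat.choose_one_right]; omega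
  | succ m ih =>
    rw [sum_range_succ, ← add_assoc, ih]
    have e1 : K+(m+1) = K+m+1 := by ring
    have e2 : K+(m+1)+1 = (K+m+1)+1 := by ring
    rw [e1]
    exact (Nat.choose_succ_succ' (K+m+1) (m+1)).symm

lemma FC_dualV (s r m : ℕ) :
    ∑ j ∈ range (m+1), (r+j).choose j * (s+(m-j)).choose (m-j) = (r+s+m+1).choose m := by
  induction s generalizing m with
  | zero =>
    calc ∑ j ∈ range (m+1), (r+j).choose j * (0+(m-j)).choose (m-j)
        = ∑ j ∈ range (m+1), (r+j).choose j := by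
          apply sum_congr rfl; intro j hj; simp
      _ = (r+m+1).choose m := FC_hockey r m
      _ = (r+0+m+1).choose m := by ring_nf
  | succ s ihs =>
    induction m with
    | zero => simp
    | succ m ihm =>
      have split : ∑ j ∈ range (m+2), (r+j).choose j * (s+1+(m+1-j)).choose (m+1-j)
          = (∑ j ∈ range (m+1), (r+j).choose j * (s+1+(m-j)).choose (m-j))
            + ∑ j ∈ range (m+2), (r+j).choose j * (s+(m+1-j)).choose (m+1-j) := by
        rw [sum_range_succ (f := fun j => (r+j).choose j * (s+1+(m+1-j)).choose (m+1-j)) (n := m+1),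
            sum_range_succ (f := fun j => (r+j).choose j * (s+(m+1-j)).choose (m+1-j)) (n := m+1)]
        have h1 : ∀ j ∈ range (m+1),
            (r+j).choose j * (s+1+(m+1-j)).choose (m+1-j)
            = (r+j).choose j * (s+1+(m-j)).choose (m-j)
              + (r+j).choose j * (s+(m+1-j)).choose (m+1-j) := by
          intro j hj
          have hjm : j ≤ m := by simpa [Nat.lt_succ_iff] using hj
          have h2 : m + 1 - j = (m - j) + 1 := by omega
          rw [h2]
          have h3 : s + 1 + (m - j + 1) = (s + 1 + (m-j)) + 1 := by ring
          rw [h3, Nat.choose_succ_succ (s+1+(m-j)) (m-j)]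
          have h4 : s + (m - j + 1) = s + 1 + (m - j) := by ring
          rw [h4]
          ring
        rw [sum_congr rfl h1, sum_add_distrib]
        simp [Nat.sub_self]
        ring
      rw [split, ihm, ihs (m+1)]
      have e1 : r+(s+1)+(m+1)+1 = (r+s+(m+1)+1)+1 := by ring
      have e2 : r+(s+1)+m+1 = r+s+(m+1)+1 := by ring
      rw [e1, e2, Nat.choose_succ_succ' (r+s+(m+1)+1) m]

/-- closed form for slice sums, as an integer. -/
def FCt (q r : ℕ) : ℕ → ℤ
  | 0 => 1
  | m+1 => ((r+m).choose (m+1) : ℤ) - q * ((r+m).choose m : ℤ)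

lemma FC_conv (q' r' m : ℕ) :
    ∑ j ∈ range (m+1), FCt (q'+1) (r'+1) j * (((q'+(m-j)).choose (m-j) : ℕ) : ℤ)
      = FCt (q'+1) (r'+1+(q'+1)) m := by
  cases m with
  | zero => simp [FCt]
  | succ m' =>
    have hsplit : ∀ j ∈ range (m'+2),
        FCt (q'+1) (r'+1) j * (((q'+(m'+1-j)).choose (m'+1-j) : ℕ) : ℤ)
        = ((r'+j).choose j : ℤ) * ((q'+(m'+1-j)).choose (m'+1-j) : ℤ)
          - (q'+1 : ℤ) * ((match j with
              | 0 => (0:ℤ)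
              | j+1 => ((r'+1+j).choose j : ℤ)) * ((q'+(m'+1-j)).choose (m'+1-j) : ℤ)) := by
      intro j _
      cases j with
      | zero => simp [FCt]
      | succ j =>
        show FCt (q'+1) (r'+1) (j+1) * _ = _
        simp only [FCt]
        push_cast
        have : r' + 1 + j = r' + (j+1) := by ring
        rw [this]
        ring
    rw [sum_congr rfl hsplit, sum_sub_distrib, ← mul_sum]
    have S1n : ∑ j ∈ range (m'+2), (r'+j).choose j * (q'+(m'+1-j)).choose (m'+1-j)
        = (r'+q'+m'+2).choose (m'+1) := by
      have h := FC_dualV q' r' (m'+1)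
      have e : r'+q'+(m'+1)+1 = r'+q'+m'+2 := by ring
      rwa [e] at h
    have S1 : ∑ j ∈ range (m'+2), ((r'+j).choose j : ℤ) * ((q'+(m'+1-j)).choose (m'+1-j) : ℤ)
        = ((r'+q'+m'+2).choose (m'+1) : ℤ) := by exact_mod_cast congrArg (Nat.cast : ℕ → ℤ) S1n
    have S2n : ∑ j ∈ range (m'+1), (r'+1+j).choose j * (q'+(m'-j)).choose (m'-j)
        = (r'+q'+m'+2).choose m' := by
      have h := FC_dualV q' (r'+1) m'
      have e : r'+1+q'+m'+1 = r'+q'+m'+2 := by ring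
      rwa [e] at h
    have S2 : ∑ j ∈ range (m'+2), ((match j with
              | 0 => (0:ℤ)
              | j+1 => ((r'+1+j).choose j : ℤ)) * ((q'+(m'+1-j)).choose (m'+1-j) : ℤ))
        = ((r'+q'+m'+2).choose m' : ℤ) := by
      rw [Finset.sum_range_succ']
      simp only [Nat.succ_sub_succ]
      rw [show ∀ (x:ℤ), (match (0:ℕ) with | 0 => (0:ℤ) | j+1 => ((r'+1+j).choose j : ℤ)) * x = 0 from fun x => by simp]
      rw [add_zero]
      exact_mod_cast congrArg (Nat.cast : ℕ → ℤ) S2n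
    rw [S1, S2]
    show _ = FCt (q'+1) (r'+1+(q'+1)) (m'+1)
    simp only [FCt]
    have e : r'+1+(q'+1)+m' = r'+q'+m'+2 := by ring
    rw [e]
    push_cast
    ring

lemma FC_tzero (q n : ℕ) (hn : 1 ≤ n) : FCt q (q*n) n = 0 := by
  obtain ⟨n', rfl⟩ : ∃ n', n = n'+1 := ⟨n-1, by omega⟩
  simp only [FCt]
  have key : (q*(n'+1)+n').choose (n'+1) * (n'+1) = q * (q*(n'+1)+n').choose n' * (n'+1) := by
    have h := Nat.choose_succ_right_eq (q*(n'+1)+n') n'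
    have e : q*(n'+1)+n' - n' = q*(n'+1) := by omega
    rw [e] at h
    calc (q*(n'+1)+n').choose (n'+1) * (n'+1) = (q*(n'+1)+n').choose n' * (q*(n'+1)) := h
      _ = q * (q*(n'+1)+n').choose n' * (n'+1) := by ring
  have key2 : (q*(n'+1)+n').choose (n'+1) = q * (q*(n'+1)+n').choose n' :=
    Nat.eq_of_mul_eq_mul_right (by omega) key
  rw [key2]
  push_cast
  ring

lemma FC_sum (q n : ℕ) (hq : 1 ≤ q) (hn : 1 ≤ n) :
    (q*n+1 : ℤ) * ∑ m ∈ range n, FCt q (q*n) m = (((q+1)*n).choose n : ℕ) := by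
  rcases Nat.lt_or_ge n 2 with h2 | h2
  · obtain rfl : n = 1 := by omega
    simp [FCt]
  · obtain ⟨N, rfl⟩ : ∃ N, n = N+2 := ⟨n-2, by omega⟩
    set r := q*(N+2) with hr
    have hsum : ∑ m ∈ range (N+2), FCt q r m
        = ((r+N+1).choose (N+1) : ℤ) - q * ((r+N+1).choose N : ℤ) := by
      rw [Finset.sum_range_succ']
      have e1 : ∀ m, FCt q r (m+1) = ((r+m).choose (m+1) : ℤ) - q * ((r+m).choose m : ℤ) :=
        fun m => rfl
      rw [show (FCt q r 0 : ℤ) = 1 from rfl]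
      calc (∑ m ∈ range (N+1), FCt q r (m+1)) + 1
          = (1 + ∑ m ∈ range (N+1), ((r+m).choose (m+1) : ℤ))
            - q * ∑ m ∈ range (N+1), ((r+m).choose m : ℤ) := by
            simp only [e1]; rw [sum_sub_distrib, ← mul_sum]; ring
        _ = ((r+N+1).choose (N+1) : ℤ) - q * ((r+N+1).choose N : ℤ) := by
            have hk1 := congrArg (Nat.cast : ℕ → ℤ) (FC_hockey' r N)
            have hk2 := congrArg (Nat.cast : ℕ → ℤ) (FC_hockey r N)
            push_cast at hk1 hk2 ⊢
            rw [hk1, hk2]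
    rw [hsum]
    -- abbreviations
    have R1 : ((r+N+1).choose (N+1) : ℤ) * (N+1) = ((r+N+1).choose N : ℤ) * (q*(N+2)+1) := by
      have h := Nat.choose_succ_right_eq (r+N+1) N
      have e : r+N+1 - N = q*(N+2)+1 := by omega
      rw [e] at h
      exact_mod_cast congrArg (Nat.cast : ℕ → ℤ) h
    have R2 : ((r+N+1).choose (N+2) : ℤ) * (N+2) = ((r+N+1).choose (N+1) : ℤ) * (q*(N+2)) := by
      have h := Nat.choose_succ_right_eq (r+N+1) (N+1)
      have e : r+N+1 - (N+1) = q*(N+2) := by omega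
      exact_mod_cast congrArg (Nat.cast : ℕ → ℤ) (by rw [e] at h; exact h)
    have R3 : (((q+1)*(N+2)).choose (N+2) : ℤ)
        = ((r+N+1).choose (N+1) : ℤ) + ((r+N+1).choose (N+2) : ℤ) := by
      have e : (q+1)*(N+2) = (r+N+1)+1 := by rw [hr]; ring
      rw [e]
      exact_mod_cast congrArg (Nat.cast : ℕ → ℤ) (Nat.choose_succ_succ' (r+N+1) (N+1))
    have hM : ((N:ℤ)+1) * ((N:ℤ)+2) ≠ 0 := by positivity
    apply mul_left_cancel₀ hM
    push_cast [hr] at R1 R2 R3 ⊢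
    linear_combination (q:ℤ)*((N:ℤ)+1)*((N:ℤ)+2)*R1 - ((N:ℤ)+1)*R2 - ((N:ℤ)+1)*((N:ℤ)+2)*R3

lemma FC_cons_decomp {M : Type*} [AddCommMonoid M] (q n : ℕ) (f : (Fin (q+1) → ℕ) → M) :
    ∑ k ∈ antidiagonalTuple (q+1) n, f k
      = ∑ ab ∈ antidiagonal n, ∑ x ∈ antidiagonalTuple q ab.2, f (Fin.cons ab.1 x) := by
  rw [Finset.sum_sigma']
  refine Finset.sum_nbij'
    (i := fun (k : Fin (q+1) → ℕ) =>
      (⟨(k 0, ∑ i, Fin.tail k i), Fin.tail k⟩ : Σ _ : ℕ × ℕ, (Fin q → ℕ)))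
    (j := fun p => Fin.cons p.1.1 p.2) ?_ ?_ ?_ ?_ ?_
  · intro k hk
    rw [mem_antidiagonalTuple] at hk
    simp only [Finset.mem_sigma, Finset.HasAntidiagonal.mem_antidiagonal, mem_antidiagonalTuple]
    refine ⟨?_, trivial⟩
    rw [← hk, Fin.sum_univ_succ]
    rfl
  · rintro ⟨ab, x⟩ hp
    simp only [Finset.mem_sigma, Finset.HasAntidiagonal.mem_antidiagonal, mem_antidiagonalTuple] at hp
    rw [mem_antidiagonalTuple, Fin.sum_cons, hp.2, hp.1]
  · intro k hk
    exact Fin.cons_self_tail k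
  · rintro ⟨ab, x⟩ hp
    simp only [Finset.mem_sigma, Finset.HasAntidiagonal.mem_antidiagonal, mem_antidiagonalTuple] at hp
    refine Sigma.ext ?_ ?_
    · simp only [Fin.cons_zero, Fin.tail_cons, hp.2]
    · simp only [Fin.tail_cons]
      exact heq_of_eq rfl
  · intro k hk
    rw [Fin.cons_self_tail]

lemma FC_card_adt (q' b : ℕ) : (antidiagonalTuple (q'+1) b).card = (q'+b).choose b := by
  induction q' generalizing b with
  | zero => simp
  | succ q' ih =>
    have h := FC_cons_decomp (q'+1) b (fun _ => (1:ℕ))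
    simp only [← Finset.card_eq_sum_ones] at h
    rw [h]
    have h2 : ∀ ab ∈ antidiagonal b, (antidiagonalTuple (q'+1) ab.2).card = (q'+ab.2).choose ab.2 :=
      fun ab _ => ih ab.2
    rw [Finset.sum_congr rfl h2, Finset.Nat.sum_antidiagonal_eq_sum_range_succ_mk]
    calc ∑ k ∈ range (b+1), (q'+(b-k)).choose (b-k)
        = ∑ k ∈ range (b+1), (q'+k).choose k := by
          rw [← Finset.sum_range_reflect (fun k => (q'+k).choose k) (b+1)]
          apply Finset.sum_congr rfl
          intro j hj
          have e : b + 1 - 1 - j = b - j := by omega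
          rw [e]
      _ = (q'+b+1).choose b := FC_hockey q' b
      _ = (q'+1+b).choose b := by ring_nf

lemma FC_swap (q m : ℕ) (f : (Fin q → ℕ) → ℕ) :
    ∑ k ∈ antidiagonalTuple q m, ∑ x ∈ Fintype.piFinset (fun j => range (k j + 1)), f x
      = ∑ ab ∈ antidiagonal m,
          (∑ x ∈ antidiagonalTuple q ab.1, f x) * (antidiagonalTuple q ab.2).card := by
  have hx : ∀ (k x : Fin q → ℕ), x ∈ Fintype.piFinset (fun j => range (k j + 1)) ↔ ∀ j, x j ≤ k j := by
    intro k x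
    simp [Fintype.mem_piFinset, Nat.lt_succ_iff]
  have rhs : ∀ ab : ℕ × ℕ,
      (∑ x ∈ antidiagonalTuple q ab.1, f x) * (antidiagonalTuple q ab.2).card
      = ∑ p ∈ antidiagonalTuple q ab.1 ×ˢ antidiagonalTuple q ab.2, f p.1 := by
    intro ab
    rw [Finset.sum_product]
    simp only [Finset.sum_const, smul_eq_mul]
    rw [mul_comm, Finset.mul_sum]
  rw [Finset.sum_congr rfl (fun ab _ => rhs ab)]
  have e1 : (∑ k ∈ antidiagonalTuple q m, ∑ x ∈ Fintype.piFinset (fun j => range (k j + 1)), f x)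
      = ∑ p ∈ (antidiagonalTuple q m).sigma (fun k => Fintype.piFinset (fun j => range (k j + 1))),
          f p.2 := Finset.sum_sigma' (antidiagonalTuple q m) (fun k => Fintype.piFinset (fun j => range (k j + 1))) (fun k x => f x)
  have e2 : (∑ ab ∈ antidiagonal m, ∑ p ∈ antidiagonalTuple q ab.1 ×ˢ antidiagonalTuple q ab.2, f p.1)
      = ∑ p ∈ (antidiagonal m).sigma (fun ab => antidiagonalTuple q ab.1 ×ˢ antidiagonalTuple q ab.2),
          f p.2.1 := Finset.sum_sigma' (antidiagonal m) (fun ab => antidiagonalTuple q ab.1 ×ˢ antidiagonalTuple q ab.2) (fun ab pr => f pr.1)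
  rw [e1, e2]
  refine Finset.sum_nbij'
    (i := fun (p : Σ _ : Fin q → ℕ, Fin q → ℕ) =>
      (⟨((∑ j, p.2 j), m - ∑ j, p.2 j), (p.2, fun j => p.1 j - p.2 j)⟩ :
        Σ _ : ℕ × ℕ, (Fin q → ℕ) × (Fin q → ℕ)))
    (j := fun (p : Σ _ : ℕ × ℕ, (Fin q → ℕ) × (Fin q → ℕ)) =>
      (⟨fun j => p.2.1 j + p.2.2 j, p.2.1⟩ : Σ _ : Fin q → ℕ, Fin q → ℕ))
    ?_ ?_ ?_ ?_ ?_
  · clear rhs e1 e2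
    rintro ⟨k, x⟩ hp
    simp only [Finset.mem_sigma, mem_antidiagonalTuple, hx] at hp
    obtain ⟨hk, hxk⟩ := hp
    have hle : ∑ j, x j ≤ m := by
      rw [← hk]; exact Finset.sum_le_sum (fun j _ => hxk j)
    simp only [Finset.mem_sigma, Finset.HasAntidiagonal.mem_antidiagonal, Finset.mem_product,
      mem_antidiagonalTuple]
    refine ⟨by omega, trivial, ?_⟩
    have : ∑ j, (x j + (k j - x j)) = ∑ j, k j := by
      apply Finset.sum_congr rfl; intro j _; have := hxk j; omega
    rw [Finset.sum_add_distrib] at this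
    omega
  · clear rhs e1 e2
    rintro ⟨ab, x, d⟩ hp
    simp only [Finset.mem_sigma, Finset.HasAntidiagonal.mem_antidiagonal, Finset.mem_product,
      mem_antidiagonalTuple] at hp
    obtain ⟨hab, hx1, hd1⟩ := hp
    simp only [Finset.mem_sigma, mem_antidiagonalTuple, hx]
    constructor
    · rw [Finset.sum_add_distrib, hx1, hd1, hab]
    · intro j; omega
  · clear rhs e1 e2
    rintro ⟨k, x⟩ hp
    simp only [Finset.mem_sigma, mem_antidiagonalTuple, hx] at hp
    refine Sigma.ext ?_ (heq_of_eq rfl)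
    funext j
    have := hp.2 j
    show x j + (k j - x j) = k j
    omega
  · clear rhs e1 e2
    rintro ⟨⟨a1, a2⟩, x, d⟩ hp
    simp only [Finset.mem_sigma, Finset.HasAntidiagonal.mem_antidiagonal, Finset.mem_product,
      mem_antidiagonalTuple] at hp
    obtain ⟨hab, hx1, hd1⟩ := hp
    refine Sigma.ext ?_ ?_
    · show ((∑ j, x j), m - ∑ j, x j) = (a1, a2)
      simp only [Prod.mk.injEq]
      constructor <;> omega
    · show HEq (x, fun j => (x j + d j) - x j) (x, d)
      have : (fun j => (x j + d j) - x j) = d := by funext j; omega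
      rw [this]
  · clear rhs e1 e2
    rintro ⟨k, x⟩ hp
    rfl

/-- For fixed `p ≥ 2`, the sums of the slices of the `p`-dimensional
Fuss–Catalan array `B_p` are the order-`p` Fuss–Catalan numbers:
`((p-1)·n + 1) * ∑_k B_p n k = binom(p·n, n)` for every positive `n`.
(Since `B_p n k = 0` whenever `∑ k_j ≥ n`, summing each coordinate over `{0,…,n-1}`
captures all nonzero terms.) -/
theorem fuss_catalan_simplex_slice_sum
    (p : ℕ) (hp : 2 ≤ p)
    (B : ℕ → (Fin (p - 1) → ℕ) → ℕ)
    (hB1 : B 1 0 = 1)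
    (hrec : ∀ n (k : Fin (p - 1) → ℕ), 1 < n → (∑ j, k j) < n →
      B n k = ∑ i ∈ Fintype.piFinset (fun j => Finset.range (k j + 1)), B (n - 1) i)
    (hzero : ∀ n (k : Fin (p - 1) → ℕ), n ≤ (∑ j, k j) → B n k = 0) :
    ∀ n : ℕ, 0 < n →
      ((p - 1) * n + 1) * (∑ k ∈ Fintype.piFinset (fun _ : Fin (p - 1) => Finset.range n), B n k)
        = Nat.choose (p * n) n := by
  intro n hn
  obtain ⟨q', hq'⟩ : ∃ q', p - 1 = q' + 1 := ⟨p - 2, by omega⟩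
  have hq1 : 1 ≤ p - 1 := by omega
  -- T n m = 0 when n ≤ m
  have hTzero : ∀ n m : ℕ, n ≤ m → ∑ k ∈ antidiagonalTuple (p-1) m, B n k = 0 := by
    intro n m hnm
    apply Finset.sum_eq_zero
    intro k hk
    rw [mem_antidiagonalTuple] at hk
    exact hzero n k (by omega)
  -- the key closed form
  have key : ∀ n, 1 ≤ n → ∀ m, m ≤ n →
      ((∑ k ∈ antidiagonalTuple (p-1) m, B n k : ℕ) : ℤ) = FCt (p-1) ((p-1)*n) m := by
    intro n hn
    induction n, hn using Nat.le_induction with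
    | base =>
      intro m hm
      interval_cases m
      · rw [antidiagonalTuple_zero_right, Finset.sum_singleton, hB1]
        rfl
      · rw [hTzero 1 1 le_rfl, FC_tzero (p-1) 1 le_rfl]
        rfl
    | succ n hn IH =>
      intro m hm
      rcases eq_or_lt_of_le hm with rfl | hmlt
      · rw [hTzero (n+1) (n+1) le_rfl, FC_tzero (p-1) (n+1) (by omega)]
        rfl
      have hm' : m ≤ n := by omega
      have step1 : ∑ k ∈ antidiagonalTuple (p-1) m, B (n+1) k
          = ∑ k ∈ antidiagonalTuple (p-1) m, ∑ x ∈ Fintype.piFinset (fun j => range (k j + 1)), B n x := by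
        apply Finset.sum_congr rfl
        intro k hk
        rw [mem_antidiagonalTuple] at hk
        have := hrec (n+1) k (by omega) (by omega)
        simpa using this
      rw [step1, FC_swap (p-1) m (B n)]
      push_cast
      have step2 : ∀ ab ∈ antidiagonal m,
          (∑ x ∈ antidiagonalTuple (p-1) ab.1, ((B n x : ℕ) : ℤ))
              * (((antidiagonalTuple (p-1) ab.2).card : ℕ) : ℤ)
          = FCt (p-1) ((p-1)*n) ab.1 * (((q' + ab.2).choose ab.2 : ℕ) : ℤ) := by
        intro ab hab
        rw [Finset.HasAntidiagonal.mem_antidiagonal] at hab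
        have h1 := IH ab.1 (le_trans (Nat.le.intro hab) hm')
        push_cast at h1
        rw [h1, hq', FC_card_adt q' ab.2]
      rw [Finset.sum_congr rfl step2, Finset.Nat.sum_antidiagonal_eq_sum_range_succ_mk]
      clear step1 step2
      obtain ⟨r', hr'⟩ : ∃ r', (p-1) * n = r' + 1 := ⟨(p-1)*n - 1, by have h := Nat.mul_le_mul hq1 hn; omega⟩
      have := FC_conv q' r' m
      rw [← hq', ← hr'] at this
      simp only [this]
      have e : (p-1) * n + (p-1) = (p-1) * (n+1) := (Nat.mul_succ (p-1) n).symm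
      rw [e]
  -- slice decomposition
  have hmaps : ∀ k ∈ Fintype.piFinset (fun _ : Fin (p-1) => Finset.range n),
      (∑ j, k j) ∈ range ((p-1)*(n-1)+1) := by
    intro k hk
    rw [Fintype.mem_piFinset] at hk
    rw [Finset.mem_range, Nat.lt_succ_iff]
    calc ∑ j, k j ≤ ∑ _j : Fin (p-1), (n-1) := by
          apply Finset.sum_le_sum
          intro j _
          have := hk j
          rw [Finset.mem_range] at this
          omega
      _ = (p-1) * (n-1) := by simp [Finset.sum_const, mul_comm]
  have slice : ∑ k ∈ Fintype.piFinset (fun _ : Fin (p-1) => Finset.range n), B n k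
      = ∑ m ∈ range n, ∑ k ∈ antidiagonalTuple (p-1) m, B n k := by
    rw [← Finset.sum_fiberwise_of_maps_to hmaps (B n)]
    have fib : ∀ m ∈ range ((p-1)*(n-1)+1),
        ∑ k ∈ (Fintype.piFinset (fun _ : Fin (p-1) => Finset.range n)).filter
            (fun k => (∑ j, k j) = m), B n k
        = ∑ k ∈ antidiagonalTuple (p-1) m, B n k := by
      intro m _
      rcases Nat.lt_or_ge m n with hmn | hmn
      · apply Finset.sum_congr
        · ext k
          simp only [Finset.mem_filter, Fintype.mem_piFinset, Finset.mem_range,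
            mem_antidiagonalTuple]
          constructor
          · rintro ⟨_, h2⟩; exact h2
          · intro h
            refine ⟨fun j => ?_, h⟩
            have hle : k j ≤ ∑ i, k i :=
              Finset.single_le_sum (f := k) (fun i _ => Nat.zero_le _) (Finset.mem_univ j)
            omega
        · intros; rfl
      · rw [hTzero n m hmn]
        apply Finset.sum_eq_zero
        intro k hk
        rw [Finset.mem_filter] at hk
        exact hzero n k (by omega)
    rw [Finset.sum_congr rfl fib]
    apply (Finset.sum_subset _ _).symm
    · intro x hx
      rw [Finset.mem_range] at hx ⊢
      have : n ≤ (p-1)*(n-1)+1 := by nlinarith [Nat.sub_add_cancel (show 1 ≤ n by omega)]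
      omega
    · intro x _ hx
      rw [Finset.mem_range, not_lt] at hx
      exact hTzero n x hx
  -- final assembly
  have final := FC_sum (p-1) n hq1 (by omega)
  rw [show p - 1 + 1 = p from by omega] at final
  have cast_eq : ((∑ m ∈ range n, ∑ k ∈ antidiagonalTuple (p-1) m, B n k : ℕ) : ℤ)
      = ∑ m ∈ range n, FCt (p-1) ((p-1)*n) m := by
    push_cast
    apply Finset.sum_congr rfl
    intro m hm
    rw [Finset.mem_range] at hm
    exact_mod_cast key n (by omega) m (by omega)
  have main : ((((p-1)*n+1 : ℕ)) : ℤ) *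
        ((∑ k ∈ Fintype.piFinset (fun _ : Fin (p-1) => Finset.range n), B n k : ℕ) : ℤ)
      = (((p*n).choose n : ℕ) : ℤ) := by
    rw [slice, cast_eq, ← final]
    push_cast
    ring
  exact_mod_cast main
end

section
/- Fix an integer p≥2 and let B_p : ℕ → (Fin (p−1) → ℕ) → ℕ satisfy: B_p(1,0)=1; for all n>1 and every tuple k=(k₁,…,k_{p−1}) with k₁+⋯+k_{p−1}<n, B_p(n,k) = ∑_{0≤i≤k componentwise} B_p(n−1,i); and B_p(n,k)=0 whenever k₁+⋯+k_{p−1}≥n. Then for all n≥1 and all tuples k with k₁+⋯+k_{p−1}<n, B_p(n,k₁,…,k_{p−1}) = (∏_{i=1}^{p−1} binom(n+k_i−1, k_i))·(n−∑_{i=1}^{p−1} k_i)/n; equivalently n·B_p(n,k) = (∏_i binom(n+k_i−1,k_i))·(n−∑_i k_i). -/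
open Finset

/-- Hockey stick: `∑_{m=0}^{k} C(n+m-1, m) = C(n+k, k)`. -/
lemma fcs_hockey (n k : ℕ) :
    ∑ m ∈ range (k + 1), Nat.choose (n + m - 1) m = Nat.choose (n + k) k := by
  induction k with
  | zero => simp
  | succ k ih =>
    rw [Finset.sum_range_succ, ih]
    have h1 : n + (k + 1) - 1 = n + k := by omega
    rw [h1]
    exact (Nat.choose_succ_succ (n + k) k).symm

/-- `(m+1) * C(n+m, m+1) = n * C(n+m, m)`. -/
lemma fcs_weighted (n m : ℕ) :
    (m + 1) * Nat.choose (n + m) (m + 1) = n * Nat.choose (n + m) m := by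
  have := Nat.choose_succ_right_eq (n + m) m
  have h : n + m - m = n := by omega
  rw [h] at this
  rw [mul_comm, this, mul_comm]

/-- `∑_{m=0}^{k} m * C(n+m-1, m) = n * ∑_{m=0}^{k-1} C(n+m, m)`. -/
lemma fcs_weighted_sum (n k : ℕ) :
    ∑ m ∈ range (k + 1), m * Nat.choose (n + m - 1) m
      = n * ∑ m ∈ range k, Nat.choose (n + m) m := by
  rw [Finset.sum_range_succ', Finset.mul_sum]
  simp only [Nat.zero_mul, add_zero]
  apply Finset.sum_congr rfl
  intro m _
  have h : n + (m + 1) - 1 = n + m := by omega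
  rw [h]
  exact fcs_weighted n m

/-- `(n+1) * ∑_{m=0}^{k-1} C(n+m, m) = k * C(n+k, k)`. -/
lemma fcs_sum_eq_choose (n k : ℕ) :
    (n + 1) * ∑ m ∈ range k, Nat.choose (n + m) m = k * Nat.choose (n + k) k := by
  cases k with
  | zero => simp
  | succ k =>
    have h := fcs_hockey (n + 1) k
    have h2 : ∀ m, n + 1 + m - 1 = n + m := fun m => by omega
    simp only [h2] at h
    have h3 : n + 1 + k = n + (k + 1) := by omega
    rw [h3] at h
    rw [h]
    have := fcs_weighted (n + 1) k
    rw [h3] at this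
    omega

/-- Explicit formula for the `p`-dimensional Fuss–Catalan array: for
`n ≥ 1` and tuples `k` with `∑ k_i < n`,
`n * B_p n k = (∏_i binom(n + k_i - 1, k_i)) * (n - ∑_i k_i)`. -/
theorem fuss_catalan_simplex_closed_formula
    (p : ℕ) (hp : 2 ≤ p)
    (B : ℕ → (Fin (p - 1) → ℕ) → ℕ)
    (hB1 : B 1 0 = 1)
    (hrec : ∀ n (k : Fin (p - 1) → ℕ), 1 < n → (∑ j, k j) < n →
      B n k = ∑ i ∈ Fintype.piFinset (fun j => Finset.range (k j + 1)), B (n - 1) i)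
    (hzero : ∀ n (k : Fin (p - 1) → ℕ), n ≤ (∑ j, k j) → B n k = 0) :
    ∀ n : ℕ, ∀ k : Fin (p - 1) → ℕ, 1 ≤ n → (∑ i, k i) < n →
      n * B n k
        = (∏ i, Nat.choose (n + k i - 1) (k i)) * (n - ∑ i, k i) := by
  have key : ∀ n : ℕ, 1 ≤ n → ∀ k : Fin (p - 1) → ℕ, (∑ i, k i) ≤ n →
      (B n k : ℚ) * n
        = (∏ i, (Nat.choose (n + k i - 1) (k i) : ℚ)) * ((n : ℚ) - ∑ i, (k i : ℚ)) := by
    intro n hn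
    induction n, hn using Nat.le_induction with
    | base =>
      intro k hk
      rcases Nat.le_one_iff_eq_zero_or_eq_one.mp hk with h | h
      · have hk0 : k = 0 := funext fun i =>
          Finset.sum_eq_zero_iff.mp h i (Finset.mem_univ i)
        subst hk0
        simp [hB1]
      · have h1 : (∑ i, (k i : ℚ)) = 1 := by
          rw [← Nat.cast_sum, h]; norm_num
        rw [hzero 1 k h.ge, h1]
        simp
    | succ n hn ih =>
      intro k hk
      have hn0 : (n : ℚ) ≠ 0 := Nat.cast_ne_zero.mpr (by omega)
      by_cases hs : ∑ i, k i = n + 1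
      · have h1 : (∑ i, (k i : ℚ)) = (n : ℚ) + 1 := by
          rw [← Nat.cast_sum, hs]; push_cast; ring
        rw [hzero (n + 1) k hs.ge, h1]
        push_cast
        ring
      · have hsle : ∑ i, k i ≤ n := by omega
        rw [hrec (n + 1) k (by omega) (by omega)]
        simp only [Nat.add_sub_cancel]
        push_cast
        -- rewrite each summand using the induction hypothesis
        have hBi : ∀ i ∈ Fintype.piFinset (fun j => Finset.range (k j + 1)),
            (B n i : ℚ) = (∏ j, (Nat.choose (n + i j - 1) (i j) : ℚ))
                * ((n : ℚ) - ∑ j, (i j : ℚ)) / n := by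
          intro i hiT
          have hile : ∀ j, i j ≤ k j := by
            intro j
            have := (Fintype.mem_piFinset.mp hiT) j
            rw [Finset.mem_range] at this
            omega
          have hsi : ∑ j, i j ≤ n :=
            le_trans (Finset.sum_le_sum fun j _ => hile j) hsle
          rw [eq_div_iff hn0]
          exact ih i hsi
        rw [Finset.sum_congr rfl hBi]
        -- abbreviations
        have h1 : ∑ i ∈ Fintype.piFinset (fun j => Finset.range (k j + 1)),
              ∏ j, (Nat.choose (n + i j - 1) (i j) : ℚ)
            = ∏ j, (Nat.choose (n + k j) (k j) : ℚ) := by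
          rw [← Finset.prod_univ_sum (fun j : Fin (p - 1) => range (k j + 1))
            (fun j m => ((Nat.choose (n + m - 1) m : ℕ) : ℚ))]
          apply Finset.prod_congr rfl
          intro j _
          rw [← Nat.cast_sum, fcs_hockey n (k j)]
        have h2 : ∀ j, ∑ i ∈ Fintype.piFinset (fun j => Finset.range (k j + 1)),
              (i j : ℚ) * ∏ l, (Nat.choose (n + i l - 1) (i l) : ℚ)
            = ((n : ℚ) * ∑ m ∈ range (k j), (Nat.choose (n + m) m : ℚ))
                * ∏ l ∈ Finset.univ.erase j, (Nat.choose (n + k l) (k l) : ℚ) := by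
          intro j
          have hpt : ∀ i : Fin (p - 1) → ℕ,
              (i j : ℚ) * ∏ l, (Nat.choose (n + i l - 1) (i l) : ℚ)
              = ∏ l, ((if l = j then (i l : ℚ) else 1)
                  * (Nat.choose (n + i l - 1) (i l) : ℚ)) := by
            intro i
            rw [Finset.prod_mul_distrib, Finset.prod_ite_eq']
            simp
          simp only [hpt]
          rw [← Finset.prod_univ_sum (fun j : Fin (p - 1) => range (k j + 1))
            (fun l m => ((if l = j then (m : ℚ) else 1)
              * (Nat.choose (n + m - 1) m : ℕ)))]
          rw [← Finset.mul_prod_erase Finset.univ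
            (fun l => ∑ m ∈ range (k l + 1),
              ((if l = j then (m : ℚ) else 1) * (Nat.choose (n + m - 1) m : ℕ)))
            (Finset.mem_univ j)]
          congr 1
          · simp only [if_pos rfl]
            have hc := fcs_weighted_sum n (k j)
            have hc' : ((∑ m ∈ range (k j + 1), m * Nat.choose (n + m - 1) m : ℕ) : ℚ)
                = ((n * ∑ m ∈ range (k j), Nat.choose (n + m) m : ℕ) : ℚ) := by
              exact_mod_cast congrArg (Nat.cast : ℕ → ℚ) hc
            push_cast at hc'
            simpa using hc'
          · apply Finset.prod_congr rfl
            intro l hl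
            have hlj : l ≠ j := Finset.ne_of_mem_erase hl
            simp only [if_neg hlj, one_mul]
            rw [← Nat.cast_sum, fcs_hockey n (k l)]
        -- the combinatorial core
        have hsub : ∑ j, ((n : ℚ) + 1)
              * ((∑ m ∈ range (k j), (Nat.choose (n + m) m : ℚ))
                * ∏ l ∈ Finset.univ.erase j, (Nat.choose (n + k l) (k l) : ℚ))
            = (∑ j, (k j : ℚ)) * ∏ j, (Nat.choose (n + k j) (k j) : ℚ) := by
          rw [Finset.sum_mul]
          apply Finset.sum_congr rfl
          intro j _
          have h3 : ((n : ℚ) + 1) * (∑ m ∈ range (k j), (Nat.choose (n + m) m : ℚ))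
              = (k j : ℚ) * (Nat.choose (n + k j) (k j) : ℚ) := by
            have hc := fcs_sum_eq_choose n (k j)
            have hc' : (((n + 1) * ∑ m ∈ range (k j), Nat.choose (n + m) m : ℕ) : ℚ)
                = ((k j * Nat.choose (n + k j) (k j) : ℕ) : ℚ) := by
              exact_mod_cast congrArg (Nat.cast : ℕ → ℚ) hc
            push_cast at hc'
            exact hc'
          rw [← mul_assoc, h3, mul_assoc,
            ← Finset.mul_prod_erase Finset.univ
              (fun l => ((Nat.choose (n + k l) (k l) : ℕ) : ℚ)) (Finset.mem_univ j)]
        -- expand the sum of products times (n - ∑ i)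
        have hexp : ∑ i ∈ Fintype.piFinset (fun j => Finset.range (k j + 1)),
              (∏ j, (Nat.choose (n + i j - 1) (i j) : ℚ)) * ((n : ℚ) - ∑ j, (i j : ℚ)) / n
            = (∏ j, (Nat.choose (n + k j) (k j) : ℚ))
              - ∑ j, (∑ m ∈ range (k j), (Nat.choose (n + m) m : ℚ))
                  * ∏ l ∈ Finset.univ.erase j, (Nat.choose (n + k l) (k l) : ℚ) := by
          have step1 : ∀ i : Fin (p - 1) → ℕ,
              (∏ j, (Nat.choose (n + i j - 1) (i j) : ℚ)) * ((n : ℚ) - ∑ j, (i j : ℚ)) / n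
              = ∏ j, (Nat.choose (n + i j - 1) (i j) : ℚ)
                - (∑ j, (i j : ℚ) * ∏ l, (Nat.choose (n + i l - 1) (i l) : ℚ)) / n := by
            intro i
            rw [← Finset.sum_mul]
            field_simp
          simp only [step1]
          rw [Finset.sum_sub_distrib, h1, ← Finset.sum_div, Finset.sum_comm]
          congr 1
          rw [Finset.sum_div]
          apply Finset.sum_congr rfl
          intro j _
          rw [h2 j, mul_assoc, mul_comm (n : ℚ), mul_div_assoc, div_self hn0,
            mul_one]
        have hidx : (∏ i, (Nat.choose (n + 1 + k i - 1) (k i) : ℚ))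
            = ∏ j, (Nat.choose (n + k j) (k j) : ℚ) := by
          apply Finset.prod_congr rfl
          intro j _
          congr 2
          omega
        rw [hexp, hidx]
        have hsub' : (∑ j, (k j : ℚ)) * ∏ j, (Nat.choose (n + k j) (k j) : ℚ)
            = ((n : ℚ) + 1) * ∑ j, (∑ m ∈ range (k j), (Nat.choose (n + m) m : ℚ))
                * ∏ l ∈ Finset.univ.erase j, (Nat.choose (n + k l) (k l) : ℚ) := by
          rw [Finset.mul_sum]
          exact hsub.symm
        linear_combination hsub'
  intro n k hn hk
  have h := key n hn k hk.le
  have hcast : ((n * B n k : ℕ) : ℚ)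
      = (((∏ i, Nat.choose (n + k i - 1) (k i)) * (n - ∑ i, k i) : ℕ) : ℚ) := by
    push_cast [Nat.cast_sub hk.le]
    rw [mul_comm ((n : ℚ)) _, h]
  exact_mod_cast hcast
end
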